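/- Let M_t ≥ 1, M_r ≥ 1, L ≥ 1 be integers and b > 0 real. Set P = M_t·M_r and Q = M_t + M_r − 1. For each integer n ≥ 1 and each r ∈ ℝ^n with r_i ≥ 0 and Σ_{i=1}^n r_i ≤ 1/L, let S_i = Σ_{j=1}^i r_j and define E_i(r) = L·[P·(1 − L·S_i) − Q·r_{i+1}] + b·S_i for i = 0, 1, …, n−1 and E_n(r) = b·S_n. Define Δ_n = sup over all such r of min_{0 ≤ i ≤ n} E_i(r). Then lim_{n→∞} Δ_n = min(b/L, L·P); that is, the infinite-layer BS distortion exponent over the L-block channel equals b/L when b < L²·M_t·M_r and equals L·M_t·M_r when b ≥ L²·M_t·M_r. -/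

import Mathlib

open Filter

/-- Auxiliary: the set of achievable exponent values with `n` layers. -/
def BSset (Mt Mr L : ℕ) (b : ℝ) (n : ℕ) : Set ℝ :=
  { v : ℝ | ∃ r : ℕ → ℝ, (∀ i, 0 ≤ r i) ∧
        (∑ i ∈ Finset.range n, r i) ≤ 1 / L ∧
        v = (Finset.range (n + 1)).inf' Finset.nonempty_range_add_one (fun i =>
          if i = n then b * ∑ j ∈ Finset.range n, r j
          else (L : ℝ) * ((Mt : ℝ) * Mr * (1 - L * ∑ j ∈ Finset.range i, r j)
              - ((Mt : ℝ) + Mr - 1) * r i)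
            + b * ∑ j ∈ Finset.range i, r j) }

/-- The infinite-layer BS distortion exponent over an `L`-block `M_t × M_r`
MIMO channel at bandwidth ratio `b` equals `min(b/L, L·M_t·M_r)`: that is,
`b/L` when `b < L² M_t M_r` and `L M_t M_r` when `b ≥ L² M_t M_r`. -/
theorem stmt_17 (Mt Mr L : ℕ) (hMt : 1 ≤ Mt) (hMr : 1 ≤ Mr) (hL : 1 ≤ L)
    (b : ℝ) (hb : 0 < b) (Δ : ℕ → ℝ)
    (hΔ : ∀ n, Δ n = sSup { v : ℝ | ∃ r : ℕ → ℝ, (∀ i, 0 ≤ r i) ∧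
        (∑ i ∈ Finset.range n, r i) ≤ 1 / L ∧
        -- `E i = L[P(1 - L·S_i) - Q·r_{i+1}] + b·S_i` for `i < n`, `E n = b·S_n`,
        -- with `P = M_t M_r`, `Q = M_t + M_r - 1`, `S_i = r_1 + ⋯ + r_i`
        v = (Finset.range (n + 1)).inf' ⟨n, by simp⟩ (fun i =>
          if i = n then b * ∑ j ∈ Finset.range n, r j
          else (L : ℝ) * ((Mt : ℝ) * Mr * (1 - L * ∑ j ∈ Finset.range i, r j)
              - ((Mt : ℝ) + Mr - 1) * r i)
            + b * ∑ j ∈ Finset.range i, r j) }) :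
    Tendsto Δ atTop (nhds (min (b / L) ((L : ℝ) * Mt * Mr))) := by
  have hΔ' : ∀ n, Δ n = sSup (BSset Mt Mr L b n) := hΔ
  have hL0 : (0:ℝ) < L := by exact_mod_cast hL
  have hMt1 : (1:ℝ) ≤ Mt := by exact_mod_cast hMt
  have hMr1 : (1:ℝ) ≤ Mr := by exact_mod_cast hMr
  set m : ℝ := min (b / L) ((L : ℝ) * Mt * Mr) with hm
  have hQ0 : (0:ℝ) ≤ (Mt:ℝ) + Mr - 1 := by linarith
  have hmbL : m ≤ b / L := min_le_left _ _
  have hmLP : m ≤ (L:ℝ) * Mt * Mr := min_le_right _ _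
  -- every element of the set is at most `m`
  have hub : ∀ n, ∀ v ∈ BSset Mt Mr L b n, v ≤ m := by
    rintro n v ⟨r, hr0, hrs, rfl⟩
    refine le_min ?_ ?_
    · -- via the term `i = n`
      refine le_trans (Finset.inf'_le _ (Finset.self_mem_range_succ n)) ?_
      simp only [if_pos rfl]
      calc b * ∑ j ∈ Finset.range n, r j ≤ b * (1 / L) :=
            mul_le_mul_of_nonneg_left hrs hb.le
        _ = b / L := by rw [mul_one_div]
    · -- via the term `i = 0`
      refine le_trans (Finset.inf'_le _ (Finset.mem_range.2 (Nat.succ_pos n))) ?_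
      rcases Nat.eq_zero_or_pos n with hn | hn
      · subst hn
        simp only [if_pos rfl]
        have : b * ∑ j ∈ Finset.range 0, r j = 0 := by simp
        rw [this]
        positivity
      · have h0n : (0:ℕ) ≠ n := (Nat.pos_iff_ne_zero.mp hn).symm
        simp only [if_neg h0n, Finset.range_zero, Finset.sum_empty]
        have h1 : 0 ≤ ((Mt:ℝ) + Mr - 1) * r 0 := mul_nonneg hQ0 (hr0 0)
        nlinarith [hL0, h1]
  -- the set is nonempty (take `r = 0`)
  have hne : ∀ n, (BSset Mt Mr L b n).Nonempty := by
    intro n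
    refine ⟨_, ⟨fun _ => 0, fun _ => le_rfl, ?_, rfl⟩⟩
    simp only [Finset.sum_const_zero]
    positivity
  have upper : ∀ n, Δ n ≤ m := by
    intro n
    rw [hΔ' n]
    exact csSup_le (hne n) (hub n)
  have lower : ∀ n : ℕ, 1 ≤ n → m - ((Mt:ℝ) + Mr - 1) / n ≤ Δ n := by
    intro n hn
    have hn0 : (0:ℝ) < n := by exact_mod_cast hn
    rw [hΔ' n]
    set x : ℝ := 1 / ((L:ℝ) * n) with hx
    have hx0 : 0 ≤ x := by positivity
    have hLx : (L:ℝ) * x = 1 / n := by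
      rw [hx]; field_simp
    have hnx : (n:ℝ) * x = 1 / L := by
      rw [hx]; field_simp
    have hmem : ((Finset.range (n + 1)).inf' Finset.nonempty_range_add_one (fun i =>
          if i = n then b * ∑ j ∈ Finset.range n, (fun _ => x) j
          else (L : ℝ) * ((Mt : ℝ) * Mr * (1 - L * ∑ j ∈ Finset.range i, (fun _ => x) j)
              - ((Mt : ℝ) + Mr - 1) * (fun _ => x) i)
            + b * ∑ j ∈ Finset.range i, (fun _ => x) j)) ∈ BSset Mt Mr L b n := by
      refine ⟨fun _ => x, fun _ => hx0, ?_, rfl⟩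
      simp only [Finset.sum_const, Finset.card_range, nsmul_eq_mul]
      rw [hnx]
    refine le_trans ?_ (le_csSup ⟨m, hub n⟩ hmem)
    refine Finset.le_inf' _ _ ?_
    intro i hi
    have hiN : i ≤ n := Nat.lt_succ_iff.mp (Finset.mem_range.mp hi)
    by_cases hic : i = n
    · simp only [if_pos hic, Finset.sum_const, Finset.card_range, nsmul_eq_mul, hnx]
      have : b * (1 / L) = b / L := by rw [mul_one_div]
      rw [this]
      have hQn : 0 ≤ ((Mt:ℝ) + Mr - 1) / n := by positivity
      linarith
    · simp only [if_neg hic, Finset.sum_const, Finset.card_range, nsmul_eq_mul]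
      -- goal : m - Q/n ≤ L*(Mt*Mr*(1 - L*(i*x)) - Q*x) + b*(i*x)
      have hiR : (i:ℝ) ≤ n := by exact_mod_cast hiN
      have hix0 : 0 ≤ (i:ℝ) * x := by positivity
      have hixn : (i:ℝ) * x ≤ 1 / L := by
        rw [← hnx]
        exact mul_le_mul_of_nonneg_right hiR hx0
      have hLQx : (L:ℝ) * (((Mt:ℝ) + Mr - 1) * x) = ((Mt:ℝ) + Mr - 1) / n := by
        rw [show (L:ℝ) * (((Mt:ℝ) + Mr - 1) * x) = ((Mt:ℝ) + Mr - 1) * ((L:ℝ) * x) by ring,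
          hLx]
        ring
      -- reduce to: m ≤ L*Mt*Mr + (i*x)*(b - L^2*Mt*Mr)
      have key : m ≤ (L:ℝ) * Mt * Mr + ((i:ℝ) * x) * (b - (L:ℝ) * L * (Mt * Mr)) := by
        rcases le_or_gt ((L:ℝ) * L * (Mt * Mr)) b with hcase | hcase
        · have : 0 ≤ ((i:ℝ) * x) * (b - (L:ℝ) * L * (Mt * Mr)) :=
            mul_nonneg hix0 (by linarith)
          linarith
        · -- b < L² Mt Mr, so m ≤ b/L; show b/L ≤ RHS
          have hLix : (L:ℝ) * ((i:ℝ) * x) ≤ 1 := by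
            calc (L:ℝ) * ((i:ℝ) * x) ≤ (L:ℝ) * (1 / L) :=
                  mul_le_mul_of_nonneg_left hixn hL0.le
              _ = 1 := by field_simp
          have hbL : b / L ≤ (L:ℝ) * Mt * Mr + ((i:ℝ) * x) * (b - (L:ℝ) * L * (Mt * Mr)) := by
            rw [div_le_iff₀ hL0]
            nlinarith [mul_nonneg (sub_nonneg.2 hLix) (sub_nonneg.2 hcase.le), hL0]
          linarith
      have expand : (L:ℝ) * ((Mt:ℝ) * Mr * (1 - L * ((i:ℝ) * x))
            - ((Mt:ℝ) + Mr - 1) * x) + b * ((i:ℝ) * x)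
          = (L:ℝ) * Mt * Mr + ((i:ℝ) * x) * (b - (L:ℝ) * L * (Mt * Mr))
            - (L:ℝ) * (((Mt:ℝ) + Mr - 1) * x) := by ring
      rw [expand, hLQx]
      linarith
  -- squeeze
  have hQn : Tendsto (fun n : ℕ => m - ((Mt:ℝ) + Mr - 1) / n) atTop (nhds m) := by
    have h0 := tendsto_const_div_atTop_nhds_zero_nat ((Mt:ℝ) + Mr - 1)
    simpa using tendsto_const_nhds.sub h0
  refine tendsto_of_tendsto_of_tendsto_of_le_of_le' hQn tendsto_const_nhds ?_ ?_
  · filter_upwards [eventually_ge_atTop 1] with n hn using lower n hn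
  · filter_upwards with n using upper n
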